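/- Let Y_1, Y_2, … : Ω → (0,1) be measurable functions on a probability space Ω equipped with a topology making it a compact metrizable space with a Borel probability measure P. Then there exists a set Ω_1 ⊆ Ω with P(Ω_1) = 1 such that the set W_1 = {(ω,t) : ω ∈ Ω_1, t ∈ {Y_1(ω), Y_2(ω), …}} is a countable union of compact subsets of Ω × (0,1). -/

import Mathlib

open MeasureTheory Set
open scoped ENNReal

noncomputable section

theorem stmt11 {Ω : Type*} [TopologicalSpace Ω] [CompactSpace Ω]
    [TopologicalSpace.MetrizableSpace Ω] [MeasurableSpace Ω] [BorelSpace Ω]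
    (P : Measure Ω) [IsProbabilityMeasure P]
    (Y : ℕ → Ω → ℝ) (hYm : ∀ n, Measurable (Y n))
    (hY1 : ∀ n ω, Y n ω ∈ Ioo (0:ℝ) 1) :
    ∃ Ω1 : Set Ω, P Ω1 = 1 ∧
      ∃ K : ℕ → Set (Ω × ℝ), (∀ n, IsCompact (K n)) ∧
        {p : Ω × ℝ | p.1 ∈ Ω1 ∧ ∃ k, Y k p.1 = p.2} = ⋃ n, K n := by
  letI : MetricSpace Ω := TopologicalSpace.metrizableSpaceMetric Ω
  haveI : SecondCountableTopology Ω := inferInstance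
  haveI : StandardBorelSpace Ω := inferInstance
  haveI : BorelSpace (Ω × ℝ) := inferInstance
  -- the graph maps
  set f : ℕ → Ω → Ω × ℝ := fun k ω => (ω, Y k ω) with hf
  have hfm : ∀ k, Measurable (f k) := fun k => measurable_id.prodMk (hYm k)
  have hfinj : ∀ k, Function.Injective (f k) := fun k ω ω' h => congrArg Prod.fst h
  have hemb : ∀ k, MeasurableEmbedding (f k) := fun k =>
    (hfm k).measurableEmbedding (hfinj k)
  -- pushforward measures
  set μ : ℕ → Measure (Ω × ℝ) := fun k => Measure.map (f k) P with hμ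
  haveI : ∀ k, IsProbabilityMeasure (μ k) := fun k =>
    Measure.isProbabilityMeasure_map (hfm k).aemeasurable
  -- inner regularity: compact subsets of the graph
  have key : ∀ k m : ℕ, ∃ K : Set (Ω × ℝ), K ⊆ range (f k) ∧ IsCompact K ∧
      μ k (range (f k) \ K) < (2 : ℝ≥0∞)⁻¹ ^ (k + m + 2) := by
    intro k m
    have hrange : MeasurableSet (range (f k)) := (hemb k).measurableSet_range
    have hfin : μ k (range (f k)) ≠ ∞ := measure_ne_top _ _
    have hε : (0 : ℝ≥0∞) < (2 : ℝ≥0∞)⁻¹ ^ (k + m + 2) :=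
      ENNReal.pow_pos (ENNReal.inv_pos.2 (by norm_num)) _
    obtain ⟨K, hKsub, hKc, hKlt⟩ := hrange.exists_isCompact_diff_lt hfin hε.ne'
    exact ⟨K, hKsub, hKc, hKlt⟩
  choose K hKsub hKc hKlt using key
  -- the compact projections and their intersections
  set D : ℕ → ℕ → Set Ω := fun k m => Prod.fst '' K k m with hD
  have hDc : ∀ k m, IsCompact (D k m) := fun k m => (hKc k m).image continuous_fst
  set C : ℕ → Set Ω := fun m => ⋂ k, D k m with hC
  have hCc : ∀ m, IsCompact (C m) :=
    fun m => (hDc 0 m).of_isClosed_subset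
      (isClosed_iInter fun k => (hDc k m).isClosed) (iInter_subset _ 0)
  -- basic fact: if ω ∈ D k m then (ω, Y k ω) ∈ K k m
  have hmemK : ∀ k m ω, ω ∈ D k m → f k ω ∈ K k m := by
    intro k m ω hω
    obtain ⟨p, hpK, hp⟩ := hω
    obtain ⟨ω', hω'⟩ := hKsub k m hpK
    have : ω' = ω := by rw [← hω'] at hp; exact hp
    rwa [← hω', this] at hpK
  -- measure bound on D complement
  have hDm : ∀ k m, P (D k m)ᶜ ≤ (2 : ℝ≥0∞)⁻¹ ^ (k + m + 2) := by
    intro k m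
    have hsub : (D k m)ᶜ ⊆ f k ⁻¹' (range (f k) \ K k m) := by
      intro ω hω
      refine ⟨mem_range_self _, fun hK => hω ⟨f k ω, hK, rfl⟩⟩
    calc P (D k m)ᶜ ≤ P (f k ⁻¹' (range (f k) \ K k m)) := measure_mono hsub
      _ = μ k (range (f k) \ K k m) := by
          rw [hμ, Measure.map_apply (hfm k)
            (((hemb k).measurableSet_range).diff (hKc k m).isClosed.measurableSet)]
      _ ≤ _ := (hKlt k m).le
  -- measure bound on C complement
  have hCm : ∀ m, P (C m)ᶜ ≤ (2 : ℝ≥0∞)⁻¹ ^ (m + 1) := by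
    intro m
    have h1 : P (C m)ᶜ ≤ ∑' k, P (D k m)ᶜ := by
      rw [hC]; simp only [compl_iInter]
      exact measure_iUnion_le _
    have h2 : ∑' k, P (D k m)ᶜ ≤ ∑' k : ℕ, (2 : ℝ≥0∞)⁻¹ ^ (k + m + 2) :=
      ENNReal.tsum_le_tsum fun k => hDm k m
    have h3 : ∑' k : ℕ, (2 : ℝ≥0∞)⁻¹ ^ (k + m + 2) = (2 : ℝ≥0∞)⁻¹ ^ (m + 1) := by
      have : ∀ k : ℕ, (2 : ℝ≥0∞)⁻¹ ^ (k + m + 2) = (2 : ℝ≥0∞)⁻¹ ^ k * (2 : ℝ≥0∞)⁻¹ ^ (m + 2) := by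
        intro k; rw [← pow_add, add_assoc]
      simp_rw [this]
      rw [ENNReal.tsum_mul_right, ENNReal.tsum_geometric]
      have h4 : ((1 : ℝ≥0∞) - 2⁻¹)⁻¹ = 2 := by
        rw [ENNReal.one_sub_inv_two]; simp
      rw [h4, pow_succ, mul_comm ((2:ℝ≥0∞)⁻¹ ^ (m+1)), ← mul_assoc,
        ENNReal.mul_inv_cancel (by norm_num) (by norm_num), one_mul]
    calc P (C m)ᶜ ≤ ∑' k, P (D k m)ᶜ := h1
      _ ≤ _ := h2.trans_eq h3
  -- the full-measure set
  refine ⟨⋃ m, C m, ?_, ?_⟩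
  · have hmeas : MeasurableSet (⋃ m, C m) :=
      MeasurableSet.iUnion fun m => (hCc m).isClosed.measurableSet
    have hcompl : P (⋃ m, C m)ᶜ = 0 := by
      refine le_antisymm ?_ zero_le
      have hub : ∀ m, P (⋃ m, C m)ᶜ ≤ (2 : ℝ≥0∞)⁻¹ ^ (m + 1) := fun m =>
        (measure_mono (compl_subset_compl.2 (subset_iUnion C m))).trans (hCm m)
      have htend : Filter.Tendsto (fun m : ℕ => (2 : ℝ≥0∞)⁻¹ ^ (m + 1))
          Filter.atTop (nhds 0) := by
        have := ENNReal.tendsto_pow_atTop_nhds_zero_of_lt_one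
          (by simp [ENNReal.inv_lt_one] : (2 : ℝ≥0∞)⁻¹ < 1)
        exact this.comp (Filter.tendsto_add_atTop_nat 1)
      exact ge_of_tendsto' htend hub
    exact (prob_compl_eq_zero_iff hmeas).1 hcompl
  · -- the compact pieces
    set e : ℕ ≃ ℕ × ℕ := (Denumerable.eqv (ℕ × ℕ)).symm with he
    refine ⟨fun n => K (e n).1 (e n).2 ∩ (C (e n).2 ×ˢ (univ : Set ℝ)), fun n => ?_, ?_⟩
    · exact (hKc _ _).inter_right ((hCc _).isClosed.prod isClosed_univ)
    · ext p
      simp only [mem_setOf_eq, mem_iUnion]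
      constructor
      · rintro ⟨hp1, k, hk⟩
        obtain ⟨m, hm⟩ := hp1
        refine ⟨e.symm (k, m), ?_⟩
        rw [Equiv.apply_symm_apply]
        have hD' : p.1 ∈ D k m := (iInter_subset (fun k => D k m) k) hm
        have := hmemK k m p.1 hD'
        rw [hf] at this
        simp only [hk] at this
        exact ⟨this, hm, mem_univ _⟩
      · rintro ⟨n, hpK, hpC, -⟩
        obtain ⟨ω, hω⟩ := hKsub _ _ hpK
        have h1 : p.1 = ω := by rw [← hω]
        have h2 : Y (e n).1 p.1 = p.2 := by rw [h1, ← hω]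
        exact ⟨⟨(e n).2, hpC⟩, (e n).1, h2⟩
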